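/- Let f : ℝ^d → ℝ be continuously differentiable with global minimizer x* and γ ∈ (0,1]. Then f is γ-quasar-convex, i.e., f(t x* + (1-t)x) ≤ γ t f* + (1 - γ t) f(x) for all x and t ∈ [0,1], if and only if γ(f(x) - f*) ≤ ⟨x - x*, ∇f(x)⟩ for all x. -/

import Mathlib

open Real
open scoped RealInnerProductSpace

theorem quasar_convex_iff_grad_condition {d : ℕ}
    (f : EuclideanSpace ℝ (Fin d) → ℝ) (xstar : EuclideanSpace ℝ (Fin d)) (γ : ℝ)
    (hf : ContDiff ℝ 1 f) (hmin : ∀ y, f xstar ≤ f y)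
    (hγ : γ ∈ Set.Ioc (0 : ℝ) 1) :
    (∀ x, ∀ t ∈ Set.Icc (0 : ℝ) 1,
        f (t • xstar + (1 - t) • x) ≤ γ * t * f xstar + (1 - γ * t) * f x) ↔
    (∀ x, γ * (f x - f xstar) ≤ ⟪x - xstar, gradient f x⟫) := by
  obtain ⟨hγ0, hγ1⟩ := hγ
  -- derivative of f along lines
  have key : ∀ (x v : EuclideanSpace ℝ (Fin d)) (t : ℝ),
      HasDerivAt (fun s : ℝ => f (x + s • v)) ⟪gradient f (x + t • v), v⟫ t := by
    intro x v t
    have hd : HasFDerivAt f (InnerProductSpace.toDual ℝ _ (gradient f (x + t • v))) (x + t • v) :=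
      (hasGradientAt_iff_hasFDerivAt.mp ((hf.differentiable one_ne_zero (x + t • v)).hasGradientAt))
    have hc : HasDerivAt (fun s : ℝ => x + s • v) v t := by
      simpa using ((hasDerivAt_id t).smul_const v).const_add x
    have hcomp := hd.comp_hasDerivAt t hc
    rw [InnerProductSpace.toDual_apply_apply] at hcomp
    exact hcomp
  have hline : ∀ (x : EuclideanSpace ℝ (Fin d)) (t : ℝ),
      x + t • (xstar - x) = t • xstar + (1 - t) • x := by
    intro x t
    rw [smul_sub, sub_smul, one_smul]; abel
  constructor
  · intro h x
    set v := xstar - x with hv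
    have hD : HasDerivAt (fun s : ℝ => f (x + s • v)) ⟪gradient f x, v⟫ 0 := by
      simpa using key x v 0
    have hs : Filter.Tendsto (slope (fun s : ℝ => f (x + s • v)) 0) (nhdsWithin 0 (Set.Ioi 0))
        (nhds ⟪gradient f x, v⟫) :=
      (hasDerivAt_iff_tendsto_slope.mp hD).mono_left
        (nhdsWithin_mono _ fun y hy => ne_of_gt hy)
    have hle : ⟪gradient f x, v⟫ ≤ -(γ * (f x - f xstar)) := by
      refine le_of_tendsto hs ?_
      filter_upwards [Ioo_mem_nhdsGT_of_mem (by norm_num : (0:ℝ) ∈ Set.Ico (0:ℝ) 1)] with t ht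
      have hq := h x t ⟨le_of_lt ht.1, le_of_lt ht.2⟩
      rw [← hline] at hq
      have h0 : f (x + (0:ℝ) • v) = f x := by simp
      rw [slope_def_field, h0]
      have ht0 : (0:ℝ) < t := ht.1
      rw [div_le_iff₀ (by linarith : (0:ℝ) < t - 0)]
      rw [← hv] at hq
      nlinarith [hq, ht0]
    have hxv : (x - xstar : EuclideanSpace ℝ (Fin d)) = -v := by rw [hv]; abel
    have hcomm : ⟪x - xstar, gradient f x⟫ = -⟪gradient f x, v⟫ := by
      rw [hxv, inner_neg_left]
      exact neg_inj.mpr (real_inner_comm _ _)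
    linarith [hle, hcomm.ge, hcomm.le]
  · intro h x t ht
    rw [← hline]
    set v := xstar - x with hv
    -- the main claim for s < 1
    have claim : ∀ s : ℝ, 0 ≤ s → s < 1 →
        f (x + s • v) ≤ γ * s * f xstar + (1 - γ * s) * f x := by
      intro s hs0 hs1
      rcases eq_or_lt_of_le hs0 with rfl | hs0'
      · simp
      -- antitone function φ r = (f(x+r•v) - f*) / (1 - γ r) on [0, s]
      have hden : ∀ r ∈ Set.Icc (0:ℝ) s, (1 : ℝ) - γ * r ≠ 0 := by
        intro r hr
        have : γ * r < 1 := by nlinarith [hr.1, hr.2]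
        linarith
      have hcont : ContinuousOn
          (fun r : ℝ => (f (x + r • v) - f xstar) / (1 - γ * r)) (Set.Icc 0 s) := by
        apply ContinuousOn.div
        · exact ((hf.continuous.comp
            (continuous_const.add (continuous_id.smul continuous_const))).sub
            continuous_const).continuousOn
        · fun_prop
        · exact hden
      have hanti : AntitoneOn
          (fun r : ℝ => (f (x + r • v) - f xstar) / (1 - γ * r)) (Set.Icc 0 s) := by
        have hD : ∀ r ∈ interior (Set.Icc (0:ℝ) s), HasDerivAt
            (fun r : ℝ => (f (x + r • v) - f xstar) / (1 - γ * r))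
            ((⟪gradient f (x + r • v), v⟫ * (1 - γ * r) -
              (f (x + r • v) - f xstar) * (-γ)) / (1 - γ * r) ^ 2) r := by
          intro r hr
          rw [interior_Icc] at hr
          have hden' : HasDerivAt (fun r : ℝ => 1 - γ * r) (-γ) r := by
            simpa using ((hasDerivAt_id r).const_mul γ).const_sub 1
          exact HasDerivAt.div ((key x v r).sub_const (f xstar)) hden'
            (hden r ⟨hr.1.le, hr.2.le⟩)
        apply antitoneOn_of_deriv_nonpos (convex_Icc 0 s) hcont
        · intro r hr
          exact ((hD r hr).differentiableAt).differentiableWithinAt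
        · intro r hr
          rw [(hD r hr).deriv]
          rw [interior_Icc] at hr
          have hr1 : r < 1 := lt_of_lt_of_le hr.2 hs1.le
          have hy := h (x + r • v)
          have hyx : x + r • v - xstar = (r - 1) • v := by
            rw [hv]; module
          rw [hyx, real_inner_smul_left, real_inner_comm] at hy
          have hu : 0 ≤ f (x + r • v) - f xstar := sub_nonneg.mpr (hmin _)
          apply div_nonpos_of_nonpos_of_nonneg _ (sq_nonneg _)
          have hpos : (0:ℝ) ≤ 1 - γ * r := by nlinarith
          have h1 := mul_le_mul_of_nonneg_right hy hpos
          nlinarith [h1, mul_nonneg (mul_nonneg (mul_nonneg hγ0.le hu) hr.1.le)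
            (by linarith : (0:ℝ) ≤ 1 - γ), (by linarith : (0:ℝ) < 1 - r)]
      have h0m : (0:ℝ) ∈ Set.Icc (0:ℝ) s := Set.left_mem_Icc.mpr hs0
      have hsm : s ∈ Set.Icc (0:ℝ) s := Set.right_mem_Icc.mpr hs0
      have := hanti h0m hsm hs0
      simp only [zero_smul, add_zero, mul_zero, sub_zero, div_one] at this
      have hpos : (0:ℝ) < 1 - γ * s := by nlinarith
      rw [div_le_iff₀ hpos] at this
      nlinarith [this]
    rcases lt_or_eq_of_le ht.2 with ht1 | rfl
    · exact claim t ht.1 ht1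
    · -- t = 1 : take limits from the left
      have hne : (nhdsWithin (1:ℝ) (Set.Iio 1)).NeBot := by infer_instance
      have htend1 : Filter.Tendsto (fun s : ℝ => f (x + s • v)) (nhdsWithin 1 (Set.Iio 1))
          (nhds (f (x + (1:ℝ) • v))) := by
        apply Filter.Tendsto.mono_left _ nhdsWithin_le_nhds
        exact (hf.continuous.comp (continuous_const.add (continuous_id.smul continuous_const))).tendsto 1
      have htend2 : Filter.Tendsto (fun s : ℝ => γ * s * f xstar + (1 - γ * s) * f x)
          (nhdsWithin 1 (Set.Iio 1)) (nhds (γ * 1 * f xstar + (1 - γ * 1) * f x)) := by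
        apply Filter.Tendsto.mono_left _ nhdsWithin_le_nhds
        exact (by fun_prop : Continuous fun s : ℝ => γ * s * f xstar + (1 - γ * s) * f x).tendsto 1
      refine le_of_tendsto_of_tendsto htend1 htend2 ?_
      filter_upwards [Ioo_mem_nhdsLT_of_mem (by norm_num : (1:ℝ) ∈ Set.Ioc (0:ℝ) 1)] with s hs
      exact claim s hs.1.le hs.2
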